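/- A positive map T : M_k → M_m has support if and only if for every positive semidefinite Hermitian matrix A ∈ M_k, rank(A)·m ≤ rank(T(A))·k. -/

import Mathlib

open Matrix BigOperators
open scoped ComplexOrder

/-- A (possibly rectangular, as long as the index types have the same cardinality)
matrix has support if some generalized permutation diagonal has nonzero product. -/
def HasSupport {R C α : Type*} [Fintype R] [Fintype C] [CommMonoidWithZero α]
    (A : Matrix R C α) : Prop :=
  ∃ σ : R ≃ C, ∏ i, A i (σ i) ≠ 0

/-- Total support: every nonzero entry lies on a nonzero generalized permutation diagonal. -/
def HasTotalSupport {R C α : Type*} [Fintype R] [Fintype C] [CommMonoidWithZero α]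
    (A : Matrix R C α) : Prop :=
  ∀ p q, A p q ≠ 0 → ∃ σ : R ≃ C, σ p = q ∧ ∏ i, A i (σ i) ≠ 0

/-- The Kronecker product `A ⊗ 1_{m×k}` of `A ∈ M_{k×m}` with the all-ones matrix `1_{m×k}`. -/
def kronOnes {R C α : Type*} (A : Matrix R C α) : Matrix (R × C) (C × R) α :=
  Matrix.of fun p q => A p.1 q.1

/-- A rectangular matrix has support if `A ⊗ 1_{m×k}` has support. -/
def RectSupport {R C α : Type*} [Fintype R] [Fintype C] [CommMonoidWithZero α]
    (A : Matrix R C α) : Prop :=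
  HasSupport (kronOnes A)

/-- A rectangular matrix has total support if `A ⊗ 1_{m×k}` has total support. -/
def RectTotalSupport {R C α : Type*} [Fintype R] [Fintype C] [CommMonoidWithZero α]
    (A : Matrix R C α) : Prop :=
  HasTotalSupport (kronOnes A)

/-- A positive map `T : M_k → M_m` has support if for all orthonormal bases
`{v_i}` of `ℂ^k` and `{w_j}` of `ℂ^m`, the matrix `(tr(T(v_i v_i*) w_j w_j*))` has
support as a rectangular matrix. -/
def MapSupport {k m : ℕ}
    (T : Matrix (Fin k) (Fin k) ℂ → Matrix (Fin m) (Fin m) ℂ) : Prop :=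
  ∀ (v : Fin k → Fin k → ℂ) (w : Fin m → Fin m → ℂ),
    (∀ i j, star (v i) ⬝ᵥ v j = if i = j then 1 else 0) →
    (∀ i j, star (w i) ⬝ᵥ w j = if i = j then 1 else 0) →
    RectSupport (Matrix.of fun i j =>
      ((T (Matrix.vecMulVec (v i) (star (v i)))) *
        Matrix.vecMulVec (w j) (star (w j))).trace)

/-- A positive map `T : M_k → M_m` has total support if for all orthonormal bases
the matrix `(tr(T(v_i v_i*) w_j w_j*))` has total support. -/
def MapTotalSupport {k m : ℕ}
    (T : Matrix (Fin k) (Fin k) ℂ → Matrix (Fin m) (Fin m) ℂ) : Prop :=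
  ∀ (v : Fin k → Fin k → ℂ) (w : Fin m → Fin m → ℂ),
    (∀ i j, star (v i) ⬝ᵥ v j = if i = j then 1 else 0) →
    (∀ i j, star (w i) ⬝ᵥ w j = if i = j then 1 else 0) →
    RectTotalSupport (Matrix.of fun i j =>
      ((T (Matrix.vecMulVec (v i) (star (v i)))) *
        Matrix.vecMulVec (w j) (star (w j))).trace)

/-- `T` is doubly stochastic: `T(Id/√k) = Id/√m` and `T*(Id/√m) = Id/√k` (the latter
expressed through the trace inner product). -/
def IsDoublyStochasticMap {k m : ℕ}
    (T : Matrix (Fin k) (Fin k) ℂ → Matrix (Fin m) (Fin m) ℂ) : Prop :=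
  T ((Real.sqrt k : ℂ)⁻¹ • 1) = (Real.sqrt m : ℂ)⁻¹ • 1 ∧
  ∀ X, (Real.sqrt m : ℂ)⁻¹ * (T X).trace = (Real.sqrt k : ℂ)⁻¹ * X.trace

section Helpers
open Module

lemma trace_mul_vecMulVec {m : ℕ} (M : Matrix (Fin m) (Fin m) ℂ) (w : Fin m → ℂ) :
    (M * Matrix.vecMulVec w (star w)).trace = star w ⬝ᵥ M *ᵥ w := by
  simp only [Matrix.trace, Matrix.diag, Matrix.mul_apply, Matrix.vecMulVec_apply,
    dotProduct, Matrix.mulVec, Pi.star_apply, Finset.mul_sum]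
  apply Finset.sum_congr rfl; intro a _; apply Finset.sum_congr rfl; intro b _; ring

lemma psd_vecMulVec {n : ℕ} (v : Fin n → ℂ) : (Matrix.vecMulVec v (star v)).PosSemidef := by
  have h : Matrix.vecMulVec v (star v) = Matrix.replicateCol (Fin 1) v * (Matrix.replicateCol (Fin 1) v)ᴴ := by
    rw [Matrix.conjTranspose_replicateCol]
    exact Matrix.vecMulVec_eq (Fin 1) v (star v)
  rw [h]
  exact Matrix.posSemidef_self_mul_conjTranspose _

lemma vecMulVec_mulVec' {n : ℕ} (v x : Fin n → ℂ) :
    Matrix.vecMulVec v (star v) *ᵥ x = (star v ⬝ᵥ x) • v := by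
  ext a
  simp only [Matrix.mulVec, Matrix.vecMulVec_apply, dotProduct, Pi.smul_apply,
    Pi.star_apply, smul_eq_mul, Finset.sum_mul]
  apply Finset.sum_congr rfl; intro b _; ring

lemma sum_mulVec' {n p : ℕ} {ι : Type*} (s : Finset ι) (f : ι → Matrix (Fin n) (Fin p) ℂ)
    (x : Fin p → ℂ) : (∑ i ∈ s, f i) *ᵥ x = ∑ i ∈ s, f i *ᵥ x := by
  classical
  induction s using Finset.induction_on with
  | empty => simp
  | insert _ _ hnotmem ih =>
      rw [Finset.sum_insert hnotmem, Finset.sum_insert hnotmem, Matrix.add_mulVec, ih]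

lemma dot_sum_mulVec {n : ℕ} {ι : Type*} (x : Fin n → ℂ) (s : Finset ι)
    (f : ι → Matrix (Fin n) (Fin n) ℂ) :
    star x ⬝ᵥ (∑ i ∈ s, f i) *ᵥ x = ∑ i ∈ s, star x ⬝ᵥ (f i) *ᵥ x := by
  classical
  induction s using Finset.induction_on with
  | empty => simp
  | insert _ _ hnotmem ih =>
      rw [Finset.sum_insert hnotmem, Finset.sum_insert hnotmem, Matrix.add_mulVec,
        dotProduct_add, ih]

lemma posSemidef_sum {n : ℕ} {ι : Type*} (s : Finset ι) (f : ι → Matrix (Fin n) (Fin n) ℂ)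
    (h : ∀ i ∈ s, (f i).PosSemidef) : (∑ i ∈ s, f i).PosSemidef := by
  classical
  induction s using Finset.induction_on with
  | empty => simpa using Matrix.PosSemidef.zero
  | insert _ _ hnotmem ih =>
      rename_i a s'
      rw [Finset.sum_insert hnotmem]
      exact (h a (Finset.mem_insert_self a s')).add
        (ih fun i hi => h i (Finset.mem_insert_of_mem hi))

lemma on_eigenvectorBasis {n : ℕ} {A : Matrix (Fin n) (Fin n) ℂ} (hA : A.IsHermitian) :
    ∀ i j, star ⇑(hA.eigenvectorBasis i) ⬝ᵥ ⇑(hA.eigenvectorBasis j) =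
      if i = j then 1 else 0 := by
  intro i j
  have h := (orthonormal_iff_ite.mp hA.eigenvectorBasis.orthonormal) i j
  rw [EuclideanSpace.inner_eq_star_dotProduct] at h
  rwa [dotProduct_comm] at h

lemma linIndep_of_on {n : ℕ} {v : Fin n → Fin n → ℂ}
    (hv : ∀ i j, star (v i) ⬝ᵥ v j = if i = j then 1 else 0) :
    LinearIndependent ℂ v := by
  rw [Fintype.linearIndependent_iff]
  intro g hg j
  have h := congrArg (fun y => star (v j) ⬝ᵥ y) hg
  simp only [dotProduct_zero] at h
  have h2 : star (v j) ⬝ᵥ (∑ i, g i • v i) = ∑ i, g i * (star (v j) ⬝ᵥ v i) := by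
    simp [dotProduct, Finset.mul_sum]
    rw [Finset.sum_comm]
    apply Finset.sum_congr rfl; intro a _; apply Finset.sum_congr rfl; intro b _; ring
  rw [h2] at h
  simpa [hv, Finset.sum_ite_eq'] using h

lemma card_le_rank' {n : ℕ} {v : Fin n → Fin n → ℂ}
    (hv : ∀ i j, star (v i) ⬝ᵥ v j = if i = j then 1 else 0) (s : Finset (Fin n))
    {A : Matrix (Fin n) (Fin n) ℂ} (hA : ∀ i ∈ s, A *ᵥ v i = v i) :
    s.card ≤ A.rank := by
  classical
  have hli : LinearIndependent ℂ (fun i : {x // x ∈ s} => v i.1) :=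
    (linIndep_of_on hv).comp _ Subtype.val_injective
  have hspan : Submodule.span ℂ (Set.range fun i : {x // x ∈ s} => v i.1) ≤
      LinearMap.range A.mulVecLin := by
    rw [Submodule.span_le]
    rintro _ ⟨i, rfl⟩
    exact ⟨v i.1, by simpa [Matrix.mulVecLin_apply] using hA i.1 i.2⟩
  have h1 := finrank_span_eq_card hli
  have h2 := Submodule.finrank_mono hspan
  rw [h1, Fintype.card_coe] at h2
  exact h2

lemma rank_le_card' {m : ℕ} {w : Fin m → Fin m → ℂ}
    (hw : ∀ i j, star (w i) ⬝ᵥ w j = if i = j then 1 else 0)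
    (M : Matrix (Fin m) (Fin m) ℂ) (N : Finset (Fin m))
    (hker : ∀ j ∉ N, M *ᵥ w j = 0) : M.rank ≤ N.card := by
  classical
  have hli : LinearIndependent ℂ (fun i : {x // x ∈ Nᶜ} => w i.1) :=
    (linIndep_of_on hw).comp _ Subtype.val_injective
  have hspan : Submodule.span ℂ (Set.range fun i : {x // x ∈ Nᶜ} => w i.1) ≤
      LinearMap.ker M.mulVecLin := by
    rw [Submodule.span_le]
    rintro _ ⟨i, rfl⟩
    have hi : i.1 ∉ N := Finset.mem_compl.mp i.2
    simp only [SetLike.mem_coe, LinearMap.mem_ker, Matrix.mulVecLin_apply]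
    exact hker i.1 hi
  have h1 := finrank_span_eq_card hli
  have h2 := Submodule.finrank_mono hspan
  rw [h1, Fintype.card_coe] at h2
  have h3 : M.rank + finrank ℂ (LinearMap.ker M.mulVecLin) = m := by
    have := LinearMap.finrank_range_add_finrank_ker M.mulVecLin
    simpa [Matrix.rank] using this
  have h4 : Nᶜ.card = m - N.card := by simp [Finset.card_compl]
  have h5 : N.card ≤ m := (Finset.card_le_card (Finset.subset_univ N)).trans (by simp)
  omega

lemma spectral_sum {n : ℕ} {A : Matrix (Fin n) (Fin n) ℂ} (hA : A.IsHermitian) :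
    A = ∑ i, (hA.eigenvalues i : ℂ) •
      Matrix.vecMulVec ⇑(hA.eigenvectorBasis i) (star ⇑(hA.eigenvectorBasis i)) := by
  conv_lhs => rw [hA.spectral_theorem]
  ext p q
  simp only [Unitary.conjStarAlgAut_apply, Unitary.coe_star, Matrix.mul_apply, Matrix.sum_apply, Matrix.smul_apply, Matrix.vecMulVec_apply,
    Matrix.diagonal_apply, Function.comp_apply, Matrix.star_apply,
    Matrix.IsHermitian.eigenvectorUnitary_apply, smul_eq_mul, Pi.star_apply,
    Finset.sum_ite_eq, Finset.mem_univ, if_true, ite_mul, zero_mul]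
  apply Finset.sum_congr rfl; intro b _
  simp only [mul_ite, mul_zero, Finset.sum_ite_eq', Finset.mem_univ, if_true]
  have hco : (RCLike.ofReal (hA.eigenvalues b) : ℂ) = ((hA.eigenvalues b : ℝ) : ℂ) := rfl
  rw [hco]; ring

end Helpers

/-- A positive map `T : M_k → M_m` has support iff
`rank(A)·m ≤ rank(T(A))·k` for every positive semidefinite `A`. -/
theorem mapSupport_iff_rank {k m : ℕ}
    (T : Matrix (Fin k) (Fin k) ℂ →ₗ[ℂ] Matrix (Fin m) (Fin m) ℂ)
    (hTpos : ∀ A : Matrix (Fin k) (Fin k) ℂ, A.PosSemidef → (T A).PosSemidef) :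
    MapSupport (fun X => T X) ↔
      ∀ A : Matrix (Fin k) (Fin k) ℂ, A.PosSemidef →
        A.rank * m ≤ (T A).rank * k := by
  classical
  constructor
  · -- support → rank inequality
    intro hsupp A hA
    have hH : A.IsHermitian := hA.1
    have hTH : (T A).IsHermitian := (hTpos A hA).1
    set v : Fin k → Fin k → ℂ := fun i => ⇑(hH.eigenvectorBasis i) with hvdef
    set w : Fin m → Fin m → ℂ := fun j => ⇑(hTH.eigenvectorBasis j) with hwdef
    obtain ⟨σ, hσ⟩ := hsupp v w (on_eigenvectorBasis hH) (on_eigenvectorBasis hTH)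
    set Bq : Fin k → Fin m → ℂ :=
      fun i j => star (w j) ⬝ᵥ (T (Matrix.vecMulVec (v i) (star (v i)))) *ᵥ (w j) with hBq
    have hσ' : ∀ p : Fin k × Fin m, Bq p.1 (σ p).1 ≠ 0 := by
      intro p
      have := (Finset.prod_ne_zero_iff.mp hσ) p (Finset.mem_univ p)
      rwa [show kronOnes (Matrix.of fun i j =>
          (((fun X => T X) (Matrix.vecMulVec (v i) (star (v i)))) *
            Matrix.vecMulVec (w j) (star (w j))).trace) p (σ p)
          = Bq p.1 (σ p).1 from trace_mul_vecMulVec _ _] at this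
    -- key claim
    have key : ∀ i j', hH.eigenvalues i ≠ 0 → hTH.eigenvalues j' = 0 → Bq i j' = 0 := by
      intro i j' hi hj
      have hker : (T A) *ᵥ w j' = 0 := by
        have h := hTH.mulVec_eigenvectorBasis j'
        rw [hj] at h; simpa using h
      have hzero : star (w j') ⬝ᵥ (T A) *ᵥ w j' = 0 := by rw [hker]; simp
      have hTAsum : T A = ∑ l, (hH.eigenvalues l : ℂ) •
          T (Matrix.vecMulVec (v l) (star (v l))) := by
        conv_lhs => rw [spectral_sum hH]
        rw [map_sum]
        exact Finset.sum_congr rfl fun l _ => map_smul T _ _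
      rw [hTAsum, dot_sum_mulVec] at hzero
      have hexp : ∀ l, star (w j') ⬝ᵥ ((hH.eigenvalues l : ℂ) •
            T (Matrix.vecMulVec (v l) (star (v l)))) *ᵥ (w j')
          = (hH.eigenvalues l : ℂ) * Bq l j' := by
        intro l
        rw [Matrix.smul_mulVec, dotProduct_smul]
        rfl
      rw [Finset.sum_congr rfl (fun l _ => hexp l)] at hzero
      have hnn : ∀ l ∈ Finset.univ, (0:ℂ) ≤ (hH.eigenvalues l : ℂ) * Bq l j' := by
        intro l _
        apply mul_nonneg
        · exact_mod_cast Complex.zero_le_real.mpr (hA.eigenvalues_nonneg l)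
        · exact (hTpos _ (psd_vecMulVec (v l))).dotProduct_mulVec_nonneg (w j')
      have hterm := (Finset.sum_eq_zero_iff_of_nonneg hnn).mp hzero i (Finset.mem_univ i)
      have hine : (hH.eigenvalues i : ℂ) ≠ 0 := by exact_mod_cast hi
      exact (mul_eq_zero.mp hterm).resolve_left hine
    set S : Finset (Fin k) := Finset.univ.filter (fun i => hH.eigenvalues i ≠ 0) with hS
    set S' : Finset (Fin m) := Finset.univ.filter (fun j => hTH.eigenvalues j ≠ 0) with hS'
    have hmap : ∀ p ∈ S ×ˢ (Finset.univ : Finset (Fin m)),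
        σ p ∈ S' ×ˢ (Finset.univ : Finset (Fin k)) := by
      rintro ⟨i, j⟩ hp
      have hi : hH.eigenvalues i ≠ 0 := by
        simp only [hS, Finset.mem_product, Finset.mem_filter, Finset.mem_univ, true_and] at hp
        exact hp.1
      have hne : hTH.eigenvalues (σ (i, j)).1 ≠ 0 := fun h0 => hσ' (i, j) (key i _ hi h0)
      simp only [hS', Finset.mem_product, Finset.mem_filter, Finset.mem_univ, true_and, and_true]
      exact hne
    have hcard := Finset.card_le_card_of_injOn (fun p => σ p) hmap (σ.injective.injOn)
    rw [Finset.card_product, Finset.card_product, Finset.card_univ, Finset.card_univ,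
      Fintype.card_fin, Fintype.card_fin] at hcard
    have hrA : A.rank = S.card := by
      rw [hH.rank_eq_card_non_zero_eigs, Fintype.card_subtype]
    have hrTA : (T A).rank = S'.card := by
      rw [hTH.rank_eq_card_non_zero_eigs, Fintype.card_subtype]
    rw [hrA, hrTA]
    exact hcard
  · -- rank inequality → support
    intro hrank v w hv hw
    set B : Matrix (Fin k) (Fin m) ℂ := Matrix.of fun i j =>
      ((T (Matrix.vecMulVec (v i) (star (v i)))) *
        Matrix.vecMulVec (w j) (star (w j))).trace with hB
    have hBeq : ∀ i j, B i j =
        star (w j) ⬝ᵥ (T (Matrix.vecMulVec (v i) (star (v i)))) *ᵥ (w j) :=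
      fun i j => trace_mul_vecMulVec _ _
    set N : Fin k → Finset (Fin m) := fun i => Finset.univ.filter (fun j => B i j ≠ 0) with hN
    set r : Fin k × Fin m → Finset (Fin m × Fin k) :=
      fun p => (N p.1) ×ˢ (Finset.univ : Finset (Fin k)) with hr
    have hall : ∀ s : Finset (Fin k × Fin m), s.card ≤ (s.biUnion r).card := by
      intro s
      set s₁ : Finset (Fin k) := s.image Prod.fst with hs₁
      have hsub : s ⊆ s₁ ×ˢ (Finset.univ : Finset (Fin m)) := by
        intro p hp
        simp only [Finset.mem_product, Finset.mem_univ, and_true, hs₁, Finset.mem_image]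
        exact ⟨p, hp, rfl⟩
      have hbun : s.biUnion r = (s₁.biUnion N) ×ˢ (Finset.univ : Finset (Fin k)) := by
        ext q
        simp only [Finset.mem_biUnion, hr, Finset.mem_product, Finset.mem_univ, and_true,
          hs₁, Finset.mem_image]
        constructor
        · rintro ⟨p, hp, hq⟩
          exact ⟨p.1, ⟨p, hp, rfl⟩, hq⟩
        · rintro ⟨i, ⟨p, hp, rfl⟩, hq⟩
          exact ⟨p, hp, hq⟩
      set A : Matrix (Fin k) (Fin k) ℂ :=
        ∑ i ∈ s₁, Matrix.vecMulVec (v i) (star (v i)) with hA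
      have hApsd : A.PosSemidef := posSemidef_sum _ _ fun i _ => psd_vecMulVec (v i)
      have h3 : s₁.card ≤ A.rank := by
        apply card_le_rank' hv s₁
        intro i hi
        rw [hA, sum_mulVec']
        rw [Finset.sum_congr rfl (fun l _ => vecMulVec_mulVec' (v l) (v i))]
        rw [Finset.sum_congr rfl (fun l _ => by rw [hv l i])]
        simp only [ite_smul, one_smul, zero_smul]
        simp [Finset.sum_ite_eq', hi]
      have h4 : (T A).rank ≤ (s₁.biUnion N).card := by
        apply rank_le_card' hw
        intro j hj
        have hTAsum : T A = ∑ i ∈ s₁, T (Matrix.vecMulVec (v i) (star (v i))) := by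
          rw [hA, map_sum]
        have hz : star (w j) ⬝ᵥ (T A) *ᵥ (w j) = 0 := by
          rw [hTAsum, dot_sum_mulVec]
          apply Finset.sum_eq_zero
          intro i hi
          have hBij : B i j = 0 := by
            by_contra hne
            exact hj (Finset.mem_biUnion.mpr ⟨i, hi, by simp [hN, hne]⟩)
          rw [← hBeq]; exact hBij
        exact ((hTpos A hApsd).dotProduct_mulVec_zero_iff (w j)).mp hz
      calc s.card ≤ s₁.card * m := by
              have := Finset.card_le_card hsub
              rwa [Finset.card_product, Finset.card_univ, Fintype.card_fin] at this
        _ ≤ A.rank * m := Nat.mul_le_mul_right _ h3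
        _ ≤ (T A).rank * k := hrank A hApsd
        _ ≤ (s₁.biUnion N).card * k := Nat.mul_le_mul_right _ h4
        _ = (s.biUnion r).card := by
              rw [hbun, Finset.card_product, Finset.card_univ, Fintype.card_fin]
    obtain ⟨f, hfinj, hfr⟩ := (Finset.all_card_le_biUnion_card_iff_exists_injective r).mp hall
    have hbij : Function.Bijective f :=
      (Fintype.bijective_iff_injective_and_card f).mpr
        ⟨hfinj, by simp [Fintype.card_prod, mul_comm]⟩
    refine ⟨Equiv.ofBijective f hbij, ?_⟩
    rw [Finset.prod_ne_zero_iff]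
    intro p _
    have hfp := hfr p
    rw [hr] at hfp
    simp only [Finset.mem_product, Finset.mem_univ, and_true, hN, Finset.mem_filter,
      true_and] at hfp
    have : kronOnes (Matrix.of fun i j =>
        (((fun X => T X) (Matrix.vecMulVec (v i) (star (v i)))) *
          Matrix.vecMulVec (w j) (star (w j))).trace) p (Equiv.ofBijective f hbij p)
        = B p.1 (f p).1 := rfl
    rw [this]
    exact hfp
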